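/- arXiv:2605.00160 — 3 statements merged into one kernel-verified Lean document; each statement's English description precedes it below -/
import Mathlib

section
/- Let T be a Markov kernel from X to X satisfying a two-sided density bound: there exist a nonnegative measure λ on X and ε > 0 such that ε·λ(A) ≤ T(A|x) ≤ (1/ε)·λ(A) for all measurable A and all x ∈ X. Then for any two probability measures μ, ν on X, the pushforwards Tμ and Tν are mutually absolutely continuous, and moreover for any measurable A with λ(A)>0, (Tμ)(A)/(Tν)(A) ∈ [ε², ε^{-2}]; hence the Hilbert distance h(Tμ, Tν) ≤ 4·log(1/ε). -/
open MeasureTheory ProbabilityTheory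
open scoped ENNReal

/-- The set of ratios `μ(A)/ν(A)` over measurable sets `A` with `ν(A) > 0`. -/
def ratioSet {X : Type*} [MeasurableSpace X] (μ ν : Measure X) : Set ℝ :=
  {r : ℝ | ∃ A : Set X, MeasurableSet A ∧ 0 < ν A ∧ r = (μ A).toReal / (ν A).toReal}

/-- Hilbert projective distance `h(μ,ν) = log (sup_A μ(A)/ν(A) · sup_A ν(A)/μ(A))`. -/
noncomputable def hilbertDist {X : Type*} [MeasurableSpace X]
    (μ ν : Measure X) : ℝ :=
  Real.log (sSup (ratioSet μ ν) * sSup (ratioSet ν μ))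

section aux
variable {X : Type*} [MeasurableSpace X]

lemma key_bounds (lam : Measure X) (ε : ℝ≥0∞)
    (T : Kernel X X) [IsMarkovKernel T]
    (hlow : ∀ x : X, ∀ A : Set X, MeasurableSet A → ε * lam A ≤ T x A)
    (hupp : ∀ x : X, ∀ A : Set X, MeasurableSet A → T x A ≤ ε⁻¹ * lam A)
    (ρ : Measure X) [IsProbabilityMeasure ρ] (A : Set X) (hA : MeasurableSet A) :
    ε * lam A ≤ (ρ.bind fun x => T x) A ∧ (ρ.bind fun x => T x) A ≤ ε⁻¹ * lam A := by
  rw [Measure.bind_apply hA (T.measurable.aemeasurable)]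
  constructor
  · calc ε * lam A = ∫⁻ _, ε * lam A ∂ρ := by simp
      _ ≤ ∫⁻ x, T x A ∂ρ := lintegral_mono fun x => hlow x A hA
  · calc ∫⁻ x, T x A ∂ρ ≤ ∫⁻ _, ε⁻¹ * lam A ∂ρ := lintegral_mono fun x => hupp x A hA
      _ = ε⁻¹ * lam A := by simp

lemma bind_univ (T : Kernel X X) [IsMarkovKernel T]
    (ρ : Measure X) [IsProbabilityMeasure ρ] :
    (ρ.bind fun x => T x) Set.univ = 1 := by
  rw [Measure.bind_apply MeasurableSet.univ T.measurable.aemeasurable]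
  simp

end aux

theorem stmt_9 {X : Type*} [MeasurableSpace X]
    (lam : Measure X) [SigmaFinite lam] (hlam : 0 < lam Set.univ)
    (ε : ℝ≥0∞) (hε0 : 0 < ε) (hε1 : ε ≤ 1)
    (T : Kernel X X) [IsMarkovKernel T]
    (hlow : ∀ x : X, ∀ A : Set X, MeasurableSet A → ε * lam A ≤ T x A)
    (hupp : ∀ x : X, ∀ A : Set X, MeasurableSet A → T x A ≤ ε⁻¹ * lam A)
    (μ ν : Measure X) [IsProbabilityMeasure μ] [IsProbabilityMeasure ν] :
    (μ.bind (fun x => T x)) ≪ (ν.bind (fun x => T x)) ∧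
    (ν.bind (fun x => T x)) ≪ (μ.bind (fun x => T x)) ∧
    (∀ A : Set X, MeasurableSet A → 0 < lam A →
      ε ^ 2 * (ν.bind (fun x => T x)) A ≤ (μ.bind (fun x => T x)) A ∧
      (μ.bind (fun x => T x)) A ≤ ε⁻¹ ^ 2 * (ν.bind (fun x => T x)) A) ∧
    hilbertDist (μ.bind (fun x => T x)) (ν.bind (fun x => T x)) ≤
      4 * Real.log (1 / ε.toReal) := by
  have hεne0 : ε ≠ 0 := hε0.ne'
  have hεnetop : ε ≠ ∞ := (hε1.trans_lt (by norm_num)).ne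
  have hinvne : ε⁻¹ ≠ ∞ := by simp [hεne0]
  -- bounds for any probability measure
  have keyμ := key_bounds lam ε T hlow hupp μ
  have keyν := key_bounds lam ε T hlow hupp ν
  set Tμ := μ.bind fun x => T x with hTμdef
  set Tν := ν.bind fun x => T x with hTνdef
  have hTμ1 : ∀ A : Set X, Tμ A ≤ 1 := fun A =>
    (measure_mono (Set.subset_univ A)).trans (bind_univ T μ).le
  have hTν1 : ∀ A : Set X, Tν A ≤ 1 := fun A =>
    (measure_mono (Set.subset_univ A)).trans (bind_univ T ν).le
  -- absolute continuity
  have acμν : Tμ ≪ Tν := by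
    apply Measure.AbsolutelyContinuous.mk
    intro A hA h0
    have hl : lam A = 0 := by
      have h := (keyν A hA).1
      rw [h0] at h
      simpa [hεne0] using nonpos_iff_eq_zero.mp h
    have := (keyμ A hA).2
    rw [hl] at this
    simpa using this
  have acνμ : Tν ≪ Tμ := by
    apply Measure.AbsolutelyContinuous.mk
    intro A hA h0
    have hl : lam A = 0 := by
      have h := (keyμ A hA).1
      rw [h0] at h
      simpa [hεne0] using nonpos_iff_eq_zero.mp h
    have := (keyν A hA).2
    rw [hl] at this
    simpa using this
  -- ratio bounds
  have ratio : ∀ A : Set X, MeasurableSet A →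
      ε ^ 2 * Tν A ≤ Tμ A ∧ Tμ A ≤ ε⁻¹ ^ 2 * Tν A := by
    intro A hA
    constructor
    · calc ε ^ 2 * Tν A ≤ ε ^ 2 * (ε⁻¹ * lam A) := by
            exact mul_le_mul_right (keyν A hA).2 _
        _ = ε * lam A := by
            rw [pow_two, mul_assoc, ← mul_assoc ε ε⁻¹, ENNReal.mul_inv_cancel hεne0 hεnetop,
              one_mul]
        _ ≤ Tμ A := (keyμ A hA).1
    · calc Tμ A ≤ ε⁻¹ * lam A := (keyμ A hA).2
        _ = ε⁻¹ * (ε⁻¹ * (ε * lam A)) := by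
            rw [← mul_assoc ε⁻¹ ε, ENNReal.inv_mul_cancel hεne0 hεnetop, one_mul]
        _ ≤ ε⁻¹ * (ε⁻¹ * Tν A) := by
            exact mul_le_mul_right (mul_le_mul_right (keyν A hA).1 _) _
        _ = ε⁻¹ ^ 2 * Tν A := by rw [pow_two, mul_assoc]
  refine ⟨acμν, acνμ, fun A hA _ => ratio A hA, ?_⟩
  -- Hilbert distance bound
  have he : 0 < ε.toReal := ENNReal.toReal_pos hεne0 hεnetop
  set c : ℝ := (1 / ε.toReal) ^ 2 with hc
  have hc1 : (1:ℝ) ≤ 1 / ε.toReal := by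
    rw [le_div_iff₀ he, one_mul]
    calc ε.toReal ≤ (1:ℝ≥0∞).toReal := ENNReal.toReal_mono (by norm_num) hε1
      _ = 1 := by simp
  have hcpos : (1:ℝ) ≤ c := one_le_pow₀ hc1
  -- generic sup bound
  have supb : ∀ (α β : Measure X), (∀ B : Set X, β B ≤ 1) →
      (∀ B : Set X, MeasurableSet B → α B ≤ ε⁻¹ ^ 2 * β B) →
      α Set.univ = 1 → β Set.univ = 1 →
      1 ∈ ratioSet α β ∧ ∀ r ∈ ratioSet α β, r ≤ c := by
    intro α β hβ1 hαβ hαu hβu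
    constructor
    · exact ⟨Set.univ, MeasurableSet.univ, by simp [hβu], by simp [hαu, hβu]⟩
    · rintro r ⟨A, hA, hpos, rfl⟩
      have hβfin : β A ≠ ∞ := ((hβ1 A).trans_lt (by norm_num)).ne
      have hβpos : 0 < (β A).toReal := ENNReal.toReal_pos hpos.ne' hβfin
      rw [div_le_iff₀ hβpos]
      have hle : α A ≤ ε⁻¹ ^ 2 * β A := hαβ A hA
      have hfin : ε⁻¹ ^ 2 * β A ≠ ∞ := ENNReal.mul_ne_top (by simp [pow_two, hinvne, ENNReal.mul_ne_top]) hβfin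
      calc (α A).toReal ≤ (ε⁻¹ ^ 2 * β A).toReal := ENNReal.toReal_mono hfin hle
        _ = c * (β A).toReal := by
            rw [ENNReal.toReal_mul, hc]
            congr 1
            rw [ENNReal.toReal_pow, ENNReal.toReal_inv, one_div]
  have hμν := supb Tμ Tν hTν1 (fun B hB => (ratio B hB).2) (bind_univ T μ) (bind_univ T ν)
  have hratioν : ∀ B : Set X, MeasurableSet B → Tν B ≤ ε⁻¹ ^ 2 * Tμ B := by
    intro B hB
    have h := (ratio B hB).1
    calc Tν B = ε⁻¹ ^ 2 * (ε ^ 2 * Tν B) := by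
          rw [← mul_assoc, ← mul_pow, ENNReal.inv_mul_cancel hεne0 hεnetop, one_pow, one_mul]
      _ ≤ ε⁻¹ ^ 2 * Tμ B := mul_le_mul_right h _
  have hνμ := supb Tν Tμ hTμ1 hratioν (bind_univ T ν) (bind_univ T μ)
  have hbdd1 : BddAbove (ratioSet Tμ Tν) := ⟨c, fun r hr => hμν.2 r hr⟩
  have hbdd2 : BddAbove (ratioSet Tν Tμ) := ⟨c, fun r hr => hνμ.2 r hr⟩
  have hs1 : sSup (ratioSet Tμ Tν) ≤ c := csSup_le ⟨1, hμν.1⟩ hμν.2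
  have hs2 : sSup (ratioSet Tν Tμ) ≤ c := csSup_le ⟨1, hνμ.1⟩ hνμ.2
  have hs1' : 1 ≤ sSup (ratioSet Tμ Tν) := le_csSup hbdd1 hμν.1
  have hs2' : 1 ≤ sSup (ratioSet Tν Tμ) := le_csSup hbdd2 hνμ.1
  rw [hilbertDist]
  have hprod : sSup (ratioSet Tμ Tν) * sSup (ratioSet Tν Tμ) ≤ (1 / ε.toReal) ^ 4 := by
    calc sSup (ratioSet Tμ Tν) * sSup (ratioSet Tν Tμ) ≤ c * c :=
          mul_le_mul hs1 hs2 (by linarith) (by linarith)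
      _ = (1 / ε.toReal) ^ 4 := by rw [hc]; ring
  have hpos : (0:ℝ) < sSup (ratioSet Tμ Tν) * sSup (ratioSet Tν Tμ) := by positivity
  calc Real.log (sSup (ratioSet Tμ Tν) * sSup (ratioSet Tν Tμ))
      ≤ Real.log ((1 / ε.toReal) ^ 4) := Real.log_le_log hpos hprod
    _ = 4 * Real.log (1 / ε.toReal) := by rw [Real.log_pow]; norm_num
end

section
/- Consider the Bayesian filter update: given a prior μ on X and a measurement density h(·,y) ≥ 0, the posterior is μ^y(dx) = h(x,y)μ(dx)/α_μ(y) where α_μ(y) = ∫h(x,y)μ(dx) > 0. Then the expected (under the true output distribution with density α_μ with respect to ψ) total variation distance between posteriors from prior μ and prior ν satisfies: ∫ ‖μ^y − ν^y‖_TV α_μ(y) ψ(dy) ≤ ‖μ−ν‖_TV + ∫|α_μ(y) − α_ν(y)| ψ(dy) ≤ (2 − δ(Q))·‖μ−ν‖_TV, where δ(Q) is the Dobrushin coefficient of the channel Q(dy|x) = h(x,y)ψ(dy), i.e., ‖Qμ−Qν‖_TV ≤ (1−δ(Q))‖μ−ν‖_TV holds. -/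
open MeasureTheory

/-- Total variation distance: `sup` over measurable `f` with `‖f‖_∞ ≤ 1` of
`|∫ f dμ - ∫ f dν|`. -/
noncomputable def tvDist {X : Type*} [MeasurableSpace X]
    (μ ν : Measure X) : ℝ :=
  sSup {r : ℝ | ∃ f : X → ℝ, Measurable f ∧ (∀ x, |f x| ≤ 1) ∧
    r = |(∫ x, f x ∂μ) - (∫ x, f x ∂ν)|}

/-- The output distribution of the channel with density `h` w.r.t. `ψ`. -/
noncomputable def channelOut {X Y : Type*} [MeasurableSpace X] [MeasurableSpace Y]
    (ψ : Measure Y) (h : X → Y → ℝ) (μ : Measure X) : Measure Y :=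
  ψ.withDensity (fun y => ENNReal.ofReal (∫ x, h x y ∂μ))

/-- Bayesian posterior `μ^y(dx) = h(x,y) μ(dx) / α_μ(y)`. -/
noncomputable def posterior {X Y : Type*} [MeasurableSpace X] [MeasurableSpace Y]
    (h : X → Y → ℝ) (μ : Measure X) (y : Y) : Measure X :=
  (ENNReal.ofReal (∫ x, h x y ∂μ))⁻¹ • μ.withDensity (fun x => ENNReal.ofReal (h x y))


namespace S12
variable {X : Type*} [MeasurableSpace X]

def tvSet (μ ν : Measure X) : Set ℝ :=
  {r : ℝ | ∃ f : X → ℝ, Measurable f ∧ (∀ x, |f x| ≤ 1) ∧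
    r = |(∫ x, f x ∂μ) - (∫ x, f x ∂ν)|}

lemma tvDist_def (μ ν : Measure X) : tvDist μ ν = sSup (tvSet μ ν) := rfl

lemma zero_mem_tvSet (μ ν : Measure X) : (0:ℝ) ∈ tvSet μ ν :=
  ⟨0, measurable_const, by norm_num, by simp⟩

lemma tvDist_le {μ ν : Measure X} {a : ℝ} (ha : 0 ≤ a)
    (H : ∀ r ∈ tvSet μ ν, r ≤ a) : tvDist μ ν ≤ a :=
  Real.sSup_le H ha

lemma tvDist_nonneg_of_bdd {μ ν : Measure X} (hb : BddAbove (tvSet μ ν)) :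
    0 ≤ tvDist μ ν :=
  le_csSup hb (zero_mem_tvSet μ ν)

lemma abs_integral_sub_le (a b : Measure X) [IsFiniteMeasure b] (hab : a ≤ b)
    {f H : X → ℝ} (hf : Measurable f) (hbd : ∀ x, |f x| ≤ H x)
    (hHb : Integrable H b) :
    |(∫ x, f x ∂b) - ∫ x, f x ∂a| ≤ (∫ x, H x ∂b) - ∫ x, H x ∂a := by
  have hfb : Integrable f b :=
    hHb.mono' hf.aestronglyMeasurable (ae_of_all _ fun x => by
      simpa using hbd x)
  have hfa : Integrable f a := hfb.mono_measure hab
  have hHa : Integrable H a := hHb.mono_measure hab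
  have hfc : Integrable f (b - a) := hfb.mono_measure Measure.sub_le
  have hHc : Integrable H (b - a) := hHb.mono_measure Measure.sub_le
  haveI : IsFiniteMeasure a := isFiniteMeasure_of_le b hab
  have hc : b - a + a = b := Measure.sub_add_cancel_of_le hab
  have hib : (∫ x, f x ∂b) = (∫ x, f x ∂(b-a)) + ∫ x, f x ∂a := by
    rw [← hc, integral_add_measure hfc hfa]; rw [hc]
  have hiHb : (∫ x, H x ∂b) = (∫ x, H x ∂(b-a)) + ∫ x, H x ∂a := by
    rw [← hc, integral_add_measure hHc hHa]; rw [hc]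
  rw [hib, hiHb]
  simp only [add_sub_cancel_right]
  have h1 : |∫ x, f x ∂(b-a)| ≤ ∫ x, |f x| ∂(b-a) := by
    simpa [Real.norm_eq_abs] using norm_integral_le_integral_norm (μ := b - a) f
  have h2 : (∫ x, |f x| ∂(b-a)) ≤ ∫ x, H x ∂(b-a) := integral_mono hfc.abs hHc hbd
  linarith

lemma integrable_of_bounded (ρ : Measure X) [IsFiniteMeasure ρ] {f : X → ℝ}
    (hf : Measurable f) (hb : ∀ x, |f x| ≤ 1) : Integrable f ρ :=
  (integrable_const (1:ℝ)).mono' hf.aestronglyMeasurable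
    (ae_of_all _ fun x => by simpa using hb x)

lemma tvDist_eq_hahn (μ ν : Measure X) [IsFiniteMeasure μ] [IsFiniteMeasure ν]
    {s : Set X} (hs : MeasurableSet s)
    (h₁ : ν.restrict s ≤ μ.restrict s) (h₂ : μ.restrict sᶜ ≤ ν.restrict sᶜ) :
    tvDist μ ν = ((μ s).toReal - (ν s).toReal) + ((ν sᶜ).toReal - (μ sᶜ).toReal) := by
  classical
  have hone : ∀ (ρ : Measure X) (t : Set X), (∫ x, (1:ℝ) ∂ρ.restrict t) = (ρ t).toReal := by
    intro ρ t
    simp [Measure.restrict_apply_univ]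
    rfl
  have key : ∀ r ∈ tvSet μ ν,
      r ≤ ((μ s).toReal - (ν s).toReal) + ((ν sᶜ).toReal - (μ sᶜ).toReal) := by
    rintro r ⟨f, hf, hbd, rfl⟩
    have b1 := abs_integral_sub_le (ν.restrict s) (μ.restrict s) h₁ hf hbd
      (integrable_const 1)
    have b2 := abs_integral_sub_le (μ.restrict sᶜ) (ν.restrict sᶜ) h₂ hf hbd
      (integrable_const 1)
    rw [hone, hone] at b1
    rw [hone, hone] at b2
    have e1 := integral_add_compl hs (integrable_of_bounded μ hf hbd)
    have e2 := integral_add_compl hs (integrable_of_bounded ν hf hbd)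
    have tri : |(∫ x, f x ∂μ) - ∫ x, f x ∂ν| ≤
        |(∫ x, f x ∂μ.restrict s) - ∫ x, f x ∂ν.restrict s| +
        |(∫ x, f x ∂ν.restrict sᶜ) - ∫ x, f x ∂μ.restrict sᶜ| := by
      rw [← e1, ← e2]
      have := abs_add_le ((∫ x, f x ∂μ.restrict s) - ∫ x, f x ∂ν.restrict s)
        ((∫ x, f x ∂μ.restrict sᶜ) - ∫ x, f x ∂ν.restrict sᶜ)
      rw [abs_sub_comm ((∫ x, f x ∂ν.restrict sᶜ)) ((∫ x, f x ∂μ.restrict sᶜ))]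
      calc |(∫ x in s, f x ∂μ) + (∫ x in sᶜ, f x ∂μ) - ((∫ x in s, f x ∂ν) + ∫ x in sᶜ, f x ∂ν)|
          = |((∫ x, f x ∂μ.restrict s) - ∫ x, f x ∂ν.restrict s) +
            ((∫ x, f x ∂μ.restrict sᶜ) - ∫ x, f x ∂ν.restrict sᶜ)| := by ring_nf
        _ ≤ _ := this
    linarith
  have hs1 : ν s ≤ μ s := by
    have := Measure.le_iff'.1 h₁ Set.univ
    simpa [Measure.restrict_apply_univ] using this
  have hs2 : μ sᶜ ≤ ν sᶜ := by
    have := Measure.le_iff'.1 h₂ Set.univ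
    simpa [Measure.restrict_apply_univ] using this
  have hD0 : 0 ≤ ((μ s).toReal - (ν s).toReal) + ((ν sᶜ).toReal - (μ sᶜ).toReal) := by
    have t1 : (ν s).toReal ≤ (μ s).toReal :=
      ENNReal.toReal_mono (measure_ne_top μ s) hs1
    have t2 : (μ sᶜ).toReal ≤ (ν sᶜ).toReal :=
      ENNReal.toReal_mono (measure_ne_top ν sᶜ) hs2
    linarith
  refine le_antisymm (tvDist_le hD0 key) ?_
  set f : X → ℝ := s.piecewise (fun _ => 1) (fun _ => -1) with hfdef
  have hfm : Measurable f := Measurable.piecewise hs measurable_const measurable_const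
  have hfb : ∀ x, |f x| ≤ 1 := by
    intro x; by_cases hx : x ∈ s
    · simp [hfdef, Set.piecewise_eq_of_mem _ _ _ hx]
    · simp [hfdef, Set.piecewise_eq_of_notMem _ _ _ hx]
  have hInt : ∀ (ρ : Measure X) [IsFiniteMeasure ρ],
      (∫ x, f x ∂ρ) = (ρ s).toReal - (ρ sᶜ).toReal := by
    intro ρ _
    rw [← integral_add_compl hs (integrable_of_bounded ρ hfm hfb)]
    have i1 : (∫ x in s, f x ∂ρ) = (ρ s).toReal := by
      rw [setIntegral_congr_fun hs (g := fun _ => (1:ℝ))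
        (fun x hx => by simp [hfdef, Set.piecewise_eq_of_mem _ _ _ hx])]
      simp
      rfl
    have i2 : (∫ x in sᶜ, f x ∂ρ) = -(ρ sᶜ).toReal := by
      rw [setIntegral_congr_fun hs.compl (g := fun _ => (-1:ℝ))
        (fun x hx => by simp [hfdef, Set.piecewise_eq_of_notMem _ _ _ (by simpa using hx : x ∉ s)])]
      simp
      rfl
    rw [i1, i2]; ring
  have mem : ((μ s).toReal - (ν s).toReal) + ((ν sᶜ).toReal - (μ sᶜ).toReal) ∈ tvSet μ ν := by
    refine ⟨f, hfm, hfb, ?_⟩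
    rw [hInt μ, hInt ν, abs_of_nonneg (by linarith)]
    ring
  exact le_csSup ⟨_, key⟩ mem

open scoped ENNReal NNReal

lemma integral_withDensity_ofReal {p : X → ℝ} (ψ : Measure X) (hp : Measurable p)
    (hp0 : ∀ x, 0 ≤ p x) (f : X → ℝ) :
    (∫ x, f x ∂ψ.withDensity (fun x => ENNReal.ofReal (p x))) = ∫ x, p x * f x ∂ψ := by
  have hrw : (fun x => ENNReal.ofReal (p x)) = fun x => ((p x).toNNReal : ℝ≥0∞) := rfl
  rw [hrw, integral_withDensity_eq_integral_smul hp.real_toNNReal]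
  congr 1; funext x
  simp [NNReal.smul_def, Real.coe_toNNReal _ (hp0 x)]

lemma mul_bounded_integrable {p f : X → ℝ} {ψ : Measure X} (hpi : Integrable p ψ)
    (hp : Measurable p) (hf : Measurable f) (hp0 : ∀ x, 0 ≤ p x)
    (hbd : ∀ x, |f x| ≤ 1) : Integrable (fun y => p y * f y) ψ :=
  hpi.mono' (hp.mul hf).aestronglyMeasurable (ae_of_all _ fun y => by
    rw [Real.norm_eq_abs, abs_mul, abs_of_nonneg (hp0 y)]
    nlinarith [hbd y, hp0 y, abs_nonneg (f y)])

lemma tvDist_withDensity (ψ : Measure X) {p q : X → ℝ}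
    (hp : Measurable p) (hq : Measurable q)
    (hp0 : ∀ x, 0 ≤ p x) (hq0 : ∀ x, 0 ≤ q x)
    (hpi : Integrable p ψ) (hqi : Integrable q ψ) :
    tvDist (ψ.withDensity fun y => ENNReal.ofReal (p y))
        (ψ.withDensity fun y => ENNReal.ofReal (q y)) = ∫ y, |p y - q y| ∂ψ := by
  classical
  have key : ∀ r ∈ tvSet (ψ.withDensity fun y => ENNReal.ofReal (p y))
      (ψ.withDensity fun y => ENNReal.ofReal (q y)), r ≤ ∫ y, |p y - q y| ∂ψ := by
    rintro r ⟨f, hf, hbd, rfl⟩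
    rw [integral_withDensity_ofReal ψ hp hp0, integral_withDensity_ofReal ψ hq hq0]
    have hintp := mul_bounded_integrable hpi hp hf hp0 hbd
    have hintq := mul_bounded_integrable hqi hq hf hq0 hbd
    have hsub : (∫ y, p y * f y ∂ψ) - ∫ y, q y * f y ∂ψ
        = ∫ y, (p y - q y) * f y ∂ψ := by
      rw [← integral_sub hintp hintq]; congr 1; funext y; ring
    rw [hsub]
    have hintpq : Integrable (fun y => (p y - q y) * f y) ψ := by
      have : (fun y => (p y - q y) * f y) = fun y => p y * f y - q y * f y := by
        funext y; ring
      rw [this]; exact hintp.sub hintq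
    have t1 : |∫ y, (p y - q y) * f y ∂ψ| ≤ ∫ y, |(p y - q y) * f y| ∂ψ := by
      simpa only [Real.norm_eq_abs] using norm_integral_le_integral_norm (μ := ψ)
        (fun y => (p y - q y) * f y)
    have t2 : (∫ y, |(p y - q y) * f y| ∂ψ) ≤ ∫ y, |p y - q y| ∂ψ := by
      refine integral_mono hintpq.abs (hpi.sub hqi).abs fun y => ?_
      rw [abs_mul]
      nlinarith [hbd y, abs_nonneg (p y - q y), abs_nonneg (f y)]
    linarith
  have habs0 : 0 ≤ ∫ y, |p y - q y| ∂ψ := integral_nonneg fun y => abs_nonneg _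
  refine le_antisymm (tvDist_le habs0 key) ?_
  set f : X → ℝ := fun y => if q y ≤ p y then 1 else -1 with hfdef
  have hfm : Measurable f := Measurable.ite (measurableSet_le hq hp)
    measurable_const measurable_const
  have hfb : ∀ x, |f x| ≤ 1 := by
    intro x; by_cases hx : q x ≤ p x <;> simp [hfdef, hx]
  have mem : (∫ y, |p y - q y| ∂ψ) ∈ tvSet (ψ.withDensity fun y => ENNReal.ofReal (p y))
      (ψ.withDensity fun y => ENNReal.ofReal (q y)) := by
    refine ⟨f, hfm, hfb, ?_⟩
    rw [integral_withDensity_ofReal ψ hp hp0, integral_withDensity_ofReal ψ hq hq0]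
    have hintp := mul_bounded_integrable hpi hp hfm hp0 hfb
    have hintq := mul_bounded_integrable hqi hq hfm hq0 hfb
    have hsub : (∫ y, p y * f y ∂ψ) - ∫ y, q y * f y ∂ψ
        = ∫ y, (p y - q y) * f y ∂ψ := by
      rw [← integral_sub hintp hintq]; congr 1; funext y; ring
    have heq : (fun y => (p y - q y) * f y) = fun y => |p y - q y| := by
      funext y
      by_cases hx : q y ≤ p y
      · simp only [hfdef, hx, if_true, mul_one]
        rw [abs_of_nonneg (by linarith)]
      · simp only [hfdef, hx, if_false]
        rw [abs_of_neg (by linarith)]; ring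
    rw [hsub, heq, abs_of_nonneg habs0]
  exact le_csSup ⟨_, key⟩ mem

section Two
variable {Y : Type*} [MeasurableSpace Y]

lemma measurable_hy {h : X → Y → ℝ} (hm : Measurable (Function.uncurry h)) (y : Y) :
    Measurable fun x => h x y :=
  hm.comp measurable_prodMk_right

lemma measurable_G {h : X → Y → ℝ} (hm : Measurable (Function.uncurry h))
    (μ' : Measure X) [SFinite μ'] :
    Measurable fun y => ∫⁻ x, ENNReal.ofReal (h x y) ∂μ' :=
  Measurable.lintegral_prod_left (ENNReal.measurable_ofReal.comp hm)

lemma alpha_eq {h : X → Y → ℝ} (hm : Measurable (Function.uncurry h))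
    (h0 : ∀ x y, 0 ≤ h x y) (μ' : Measure X) :
    (fun y => ∫ x, h x y ∂μ') = fun y => (∫⁻ x, ENNReal.ofReal (h x y) ∂μ').toReal :=
  funext fun y => integral_eq_lintegral_of_nonneg_ae (ae_of_all _ fun x => h0 x y)
    (measurable_hy hm y).aestronglyMeasurable

lemma lintegral_G (ψ : Measure Y) [SigmaFinite ψ] {h : X → Y → ℝ}
    (hm : Measurable (Function.uncurry h)) (h0 : ∀ x y, 0 ≤ h x y)
    (h1 : ∀ x, ∫ y, h x y ∂ψ = 1)
    (μ' : Measure X) [IsFiniteMeasure μ'] :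
    ∫⁻ y, ∫⁻ x, ENNReal.ofReal (h x y) ∂μ' ∂ψ = μ' Set.univ := by
  have hmu : Measurable (Function.uncurry fun x y => ENNReal.ofReal (h x y)) :=
    ENNReal.measurable_ofReal.comp hm
  rw [← lintegral_lintegral_swap hmu.aemeasurable]
  have inner : ∀ x, ∫⁻ y, ENNReal.ofReal (h x y) ∂ψ = 1 := by
    intro x
    have hint : Integrable (fun y => h x y) ψ := by
      by_contra hni
      have := h1 x
      rw [integral_undef hni] at this
      norm_num at this
    rw [← ofReal_integral_eq_lintegral_ofReal hint (ae_of_all _ fun y => h0 x y), h1 x]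
    simp
  simp_rw [inner]
  simp

lemma integrable_alpha (ψ : Measure Y) [SigmaFinite ψ] {h : X → Y → ℝ}
    (hm : Measurable (Function.uncurry h)) (h0 : ∀ x y, 0 ≤ h x y)
    (h1 : ∀ x, ∫ y, h x y ∂ψ = 1)
    (μ' : Measure X) [IsFiniteMeasure μ'] :
    Integrable (fun y => ∫ x, h x y ∂μ') ψ := by
  rw [alpha_eq hm h0]
  exact integrable_toReal_of_lintegral_ne_top (measurable_G hm μ').aemeasurable
    (by rw [lintegral_G ψ hm h0 h1 μ']; exact measure_ne_top μ' _)

lemma integral_alpha (ψ : Measure Y) [SigmaFinite ψ] {h : X → Y → ℝ}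
    (hm : Measurable (Function.uncurry h)) (h0 : ∀ x y, 0 ≤ h x y)
    (h1 : ∀ x, ∫ y, h x y ∂ψ = 1)
    (μ' : Measure X) [IsFiniteMeasure μ'] :
    ∫ y, (∫ x, h x y ∂μ') ∂ψ = (μ' Set.univ).toReal := by
  rw [alpha_eq hm h0, integral_toReal (measurable_G hm μ').aemeasurable
    (ae_lt_top (measurable_G hm μ') (by rw [lintegral_G ψ hm h0 h1 μ']; exact measure_ne_top μ' _)),
    lintegral_G ψ hm h0 h1 μ']

end Two

end S12

theorem stmt_12 {X Y : Type*} [MeasurableSpace X] [StandardBorelSpace X]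
    [MeasurableSpace Y] [StandardBorelSpace Y]
    (ψ : Measure Y) [SigmaFinite ψ]
    (h : X → Y → ℝ) (hm : Measurable (Function.uncurry h))
    (h0 : ∀ x y, 0 ≤ h x y) (h1 : ∀ x, ∫ y, h x y ∂ψ = 1)
    (μ ν : Measure X) [IsProbabilityMeasure μ] [IsProbabilityMeasure ν]
    (hpos : ∀ᵐ y ∂ψ, 0 < (∫ x, h x y ∂μ) ∧ 0 < (∫ x, h x y ∂ν))
    (δ : ℝ) (hδ0 : 0 ≤ δ) (hδ1 : δ ≤ 1)
    (hDob : ∀ ρ₁ ρ₂ : Measure X, IsProbabilityMeasure ρ₁ → IsProbabilityMeasure ρ₂ →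
      tvDist (channelOut ψ h ρ₁) (channelOut ψ h ρ₂) ≤ (1 - δ) * tvDist ρ₁ ρ₂) :
    (∫ y, tvDist (posterior h μ y) (posterior h ν y) * (∫ x, h x y ∂μ) ∂ψ) ≤
      tvDist μ ν + (∫ y, |(∫ x, h x y ∂μ) - (∫ x, h x y ∂ν)| ∂ψ) ∧
    tvDist μ ν + (∫ y, |(∫ x, h x y ∂μ) - (∫ x, h x y ∂ν)| ∂ψ) ≤
      (2 - δ) * tvDist μ ν := by
  classical
  obtain ⟨s, hs, hs1, hs2⟩ := hahn_decomposition (μ := μ) (ν := ν)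
  have hrs : ν.restrict s ≤ μ.restrict s := by
    refine Measure.le_iff.2 fun t ht => ?_
    rw [Measure.restrict_apply ht, Measure.restrict_apply ht]
    exact hs1 _ (ht.inter hs) Set.inter_subset_right
  have hrsc : μ.restrict sᶜ ≤ ν.restrict sᶜ := by
    refine Measure.le_iff.2 fun t ht => ?_
    rw [Measure.restrict_apply ht, Measure.restrict_apply ht]
    exact hs2 _ (ht.inter hs.compl) Set.inter_subset_right
  have tvD := S12.tvDist_eq_hahn μ ν hs hrs hrsc
  have htv0 : 0 ≤ tvDist μ ν := by
    rw [tvD]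
    have t1 : (ν s).toReal ≤ (μ s).toReal :=
      ENNReal.toReal_mono (measure_ne_top μ s) (hs1 s hs subset_rfl)
    have t2 : (μ sᶜ).toReal ≤ (ν sᶜ).toReal :=
      ENNReal.toReal_mono (measure_ne_top ν sᶜ) (hs2 sᶜ hs.compl subset_rfl)
    linarith
  have hint1 : Integrable (fun y => ∫ x, h x y ∂μ.restrict s) ψ :=
    S12.integrable_alpha ψ hm h0 h1 (μ.restrict s)
  have hint2 : Integrable (fun y => ∫ x, h x y ∂ν.restrict s) ψ :=
    S12.integrable_alpha ψ hm h0 h1 (ν.restrict s)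
  have hint3 : Integrable (fun y => ∫ x, h x y ∂ν.restrict sᶜ) ψ :=
    S12.integrable_alpha ψ hm h0 h1 (ν.restrict sᶜ)
  have hint4 : Integrable (fun y => ∫ x, h x y ∂μ.restrict sᶜ) ψ :=
    S12.integrable_alpha ψ hm h0 h1 (μ.restrict sᶜ)
  have hintαμ : Integrable (fun y => ∫ x, h x y ∂μ) ψ :=
    S12.integrable_alpha ψ hm h0 h1 μ
  have hintαν : Integrable (fun y => ∫ x, h x y ∂ν) ψ :=
    S12.integrable_alpha ψ hm h0 h1 ν
  set g : Y → ℝ := fun y =>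
    ((∫ x, h x y ∂μ.restrict s) - ∫ x, h x y ∂ν.restrict s) +
    ((∫ x, h x y ∂ν.restrict sᶜ) - ∫ x, h x y ∂μ.restrict sᶜ) +
    |(∫ x, h x y ∂μ) - ∫ x, h x y ∂ν| with hgdef
  have hintg : Integrable g ψ :=
    ((hint1.sub hint2).add (hint3.sub hint4)).add (hintαμ.sub hintαν).abs
  have hi12 : Integrable (fun y => (∫ x, h x y ∂μ.restrict s) - ∫ x, h x y ∂ν.restrict s) ψ :=
    hint1.sub hint2
  have hi34 : Integrable (fun y =>
      (∫ x, h x y ∂ν.restrict sᶜ) - ∫ x, h x y ∂μ.restrict sᶜ) ψ := hint3.sub hint4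
  have hiabs : Integrable (fun y => |(∫ x, h x y ∂μ) - ∫ x, h x y ∂ν|) ψ :=
    (hintαμ.sub hintαν).abs
  have hi1234 : Integrable (fun y =>
      ((∫ x, h x y ∂μ.restrict s) - ∫ x, h x y ∂ν.restrict s) +
      ((∫ x, h x y ∂ν.restrict sᶜ) - ∫ x, h x y ∂μ.restrict sᶜ)) ψ := hi12.add hi34
  have hig : (∫ y, g y ∂ψ) = tvDist μ ν + ∫ y, |(∫ x, h x y ∂μ) - ∫ x, h x y ∂ν| ∂ψ := by
    simp only [hgdef]
    rw [integral_add hi1234 hiabs,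
      integral_add hi12 hi34,
      integral_sub hint1 hint2, integral_sub hint3 hint4,
      S12.integral_alpha ψ hm h0 h1 (μ.restrict s),
      S12.integral_alpha ψ hm h0 h1 (ν.restrict s),
      S12.integral_alpha ψ hm h0 h1 (ν.restrict sᶜ),
      S12.integral_alpha ψ hm h0 h1 (μ.restrict sᶜ), tvD]
    simp [Measure.restrict_apply_univ]
  have hGμfin : ∀ᵐ y ∂ψ, (∫⁻ x, ENNReal.ofReal (h x y) ∂μ) < ⊤ :=
    ae_lt_top (S12.measurable_G hm μ)
      (by rw [S12.lintegral_G ψ hm h0 h1 μ]; exact measure_ne_top μ _)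
  have hGνfin : ∀ᵐ y ∂ψ, (∫⁻ x, ENNReal.ofReal (h x y) ∂ν) < ⊤ :=
    ae_lt_top (S12.measurable_G hm ν)
      (by rw [S12.lintegral_G ψ hm h0 h1 ν]; exact measure_ne_top ν _)
  have hae : ∀ᵐ y ∂ψ,
      tvDist (posterior h μ y) (posterior h ν y) * (∫ x, h x y ∂μ) ≤ g y ∧
      0 ≤ tvDist (posterior h μ y) (posterior h ν y) * (∫ x, h x y ∂μ) := by
    filter_upwards [hpos, hGμfin, hGνfin] with y hy hfinμ hfinν
    obtain ⟨hyμ, hyν⟩ := hy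
    have hhy : Measurable fun x => h x y := S12.measurable_hy hm y
    have h0y : ∀ x, 0 ≤ h x y := fun x => h0 x y
    have hIμ : Integrable (fun x => h x y) μ :=
      ⟨hhy.aestronglyMeasurable,
        (hasFiniteIntegral_iff_ofReal (ae_of_all _ h0y)).2 hfinμ⟩
    have hIν : Integrable (fun x => h x y) ν :=
      ⟨hhy.aestronglyMeasurable,
        (hasFiniteIntegral_iff_ofReal (ae_of_all _ h0y)).2 hfinν⟩
    have hg12 := S12.abs_integral_sub_le (ν.restrict s) (μ.restrict s) hrs hhy
      (fun x => le_of_eq (abs_of_nonneg (h0y x))) hIμ.restrict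
    have hg34 := S12.abs_integral_sub_le (μ.restrict sᶜ) (ν.restrict sᶜ) hrsc hhy
      (fun x => le_of_eq (abs_of_nonneg (h0y x))) hIν.restrict
    have hg0 : 0 ≤ g y := by
      simp only [hgdef]
      have a1 := abs_nonneg ((∫ x, h x y ∂μ.restrict s) - ∫ x, h x y ∂ν.restrict s)
      have a2 := abs_nonneg ((∫ x, h x y ∂ν.restrict sᶜ) - ∫ x, h x y ∂μ.restrict sᶜ)
      have a3 := abs_nonneg ((∫ x, h x y ∂μ) - ∫ x, h x y ∂ν)
      linarith
    have post_eq : ∀ (ρ : Measure X), 0 < (∫ x, h x y ∂ρ) → ∀ f : X → ℝ,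
        (∫ x, f x ∂posterior h ρ y) = (∫ x, h x y ∂ρ)⁻¹ * ∫ x, h x y * f x ∂ρ := by
      intro ρ hρpos f
      rw [posterior, integral_smul_measure,
        S12.integral_withDensity_ofReal ρ hhy h0y f,
        ENNReal.toReal_inv, ENNReal.toReal_ofReal hρpos.le, smul_eq_mul]
    have bound : ∀ r ∈ S12.tvSet (posterior h μ y) (posterior h ν y),
        r ≤ g y / (∫ x, h x y ∂μ) := by
      rintro r ⟨f, hf, hbd, rfl⟩
      rw [post_eq μ hyμ f, post_eq ν hyν f, le_div_iff₀ hyμ]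
      have hIfμ : Integrable (fun x => h x y * f x) μ :=
        S12.mul_bounded_integrable hIμ hhy hf h0y hbd
      have hIfν : Integrable (fun x => h x y * f x) ν :=
        S12.mul_bounded_integrable hIν hhy hf h0y hbd
      have hbd' : ∀ x, |h x y * f x| ≤ h x y := fun x => by
        rw [abs_mul, abs_of_nonneg (h0y x)]
        nlinarith [hbd x, h0y x, abs_nonneg (f x)]
      have hBle : |∫ x, h x y * f x ∂ν| ≤ ∫ x, h x y ∂ν := by
        have t1 : |∫ x, h x y * f x ∂ν| ≤ ∫ x, |h x y * f x| ∂ν := by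
          simpa only [Real.norm_eq_abs] using
            norm_integral_le_integral_norm (μ := ν) (fun x => h x y * f x)
        have t2 : (∫ x, |h x y * f x| ∂ν) ≤ ∫ x, h x y ∂ν :=
          integral_mono hIfν.abs hIν hbd'
        linarith
      have b1 := S12.abs_integral_sub_le (ν.restrict s) (μ.restrict s) hrs
        (hhy.mul hf) hbd' hIμ.restrict
      have b2 := S12.abs_integral_sub_le (μ.restrict sᶜ) (ν.restrict sᶜ) hrsc
        (hhy.mul hf) hbd' hIν.restrict
      have eA := integral_add_compl hs hIfμ
      have eB := integral_add_compl hs hIfν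
      have hAB : |(∫ x, h x y * f x ∂μ) - ∫ x, h x y * f x ∂ν| ≤
          ((∫ x, h x y ∂μ.restrict s) - ∫ x, h x y ∂ν.restrict s) +
          ((∫ x, h x y ∂ν.restrict sᶜ) - ∫ x, h x y ∂μ.restrict sᶜ) := by
        have tri : |(∫ x, h x y * f x ∂μ) - ∫ x, h x y * f x ∂ν| ≤
            |(∫ x, h x y * f x ∂μ.restrict s) - ∫ x, h x y * f x ∂ν.restrict s| +
            |(∫ x, h x y * f x ∂ν.restrict sᶜ) - ∫ x, h x y * f x ∂μ.restrict sᶜ| := by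
          rw [← eA, ← eB]
          have habs := abs_add_le
            ((∫ x, h x y * f x ∂μ.restrict s) - ∫ x, h x y * f x ∂ν.restrict s)
            ((∫ x, h x y * f x ∂μ.restrict sᶜ) - ∫ x, h x y * f x ∂ν.restrict sᶜ)
          rw [abs_sub_comm (∫ x, h x y * f x ∂ν.restrict sᶜ)
            (∫ x, h x y * f x ∂μ.restrict sᶜ)]
          have heq : (∫ x in s, (h x y * f x) ∂μ) + (∫ x in sᶜ, (h x y * f x) ∂μ) -
              ((∫ x in s, (h x y * f x) ∂ν) + ∫ x in sᶜ, (h x y * f x) ∂ν) =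
              ((∫ x, h x y * f x ∂μ.restrict s) - ∫ x, h x y * f x ∂ν.restrict s) +
              ((∫ x, h x y * f x ∂μ.restrict sᶜ) - ∫ x, h x y * f x ∂ν.restrict sᶜ) := by
            ring
          rw [heq]
          exact habs
        simp only [Pi.mul_apply] at b1 b2
        linarith
      have e1 : |(∫ x, h x y ∂μ)⁻¹ * (∫ x, h x y * f x ∂μ) -
          (∫ x, h x y ∂ν)⁻¹ * (∫ x, h x y * f x ∂ν)| * (∫ x, h x y ∂μ) =
          |((∫ x, h x y ∂μ)⁻¹ * (∫ x, h x y * f x ∂μ) -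
          (∫ x, h x y ∂ν)⁻¹ * (∫ x, h x y * f x ∂ν)) * (∫ x, h x y ∂μ)| := by
        rw [abs_mul, abs_of_pos hyμ]
      have e2 : ((∫ x, h x y ∂μ)⁻¹ * (∫ x, h x y * f x ∂μ) -
          (∫ x, h x y ∂ν)⁻¹ * (∫ x, h x y * f x ∂ν)) * (∫ x, h x y ∂μ) =
          ((∫ x, h x y * f x ∂μ) - ∫ x, h x y * f x ∂ν) +
          (((∫ x, h x y ∂ν) - ∫ x, h x y ∂μ) / (∫ x, h x y ∂ν)) *
            (∫ x, h x y * f x ∂ν) := by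
        field_simp
        ring
      have e3 : |(((∫ x, h x y ∂ν) - ∫ x, h x y ∂μ) / (∫ x, h x y ∂ν)) *
          (∫ x, h x y * f x ∂ν)| ≤ |(∫ x, h x y ∂μ) - ∫ x, h x y ∂ν| := by
        rw [abs_mul, abs_div, abs_of_pos hyν]
        have t3 := mul_le_mul_of_nonneg_left hBle
          (div_nonneg (abs_nonneg ((∫ x, h x y ∂ν) - ∫ x, h x y ∂μ)) hyν.le)
        have t4 : |(∫ x, h x y ∂ν) - ∫ x, h x y ∂μ| / (∫ x, h x y ∂ν) *
            (∫ x, h x y ∂ν) = |(∫ x, h x y ∂ν) - ∫ x, h x y ∂μ| :=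
          div_mul_cancel₀ _ hyν.ne'
        rw [abs_sub_comm ((∫ x, h x y ∂μ)) ((∫ x, h x y ∂ν))]
        linarith
      rw [e1, e2]
      have tri2 := abs_add_le ((∫ x, h x y * f x ∂μ) - ∫ x, h x y * f x ∂ν)
        ((((∫ x, h x y ∂ν) - ∫ x, h x y ∂μ) / (∫ x, h x y ∂ν)) * (∫ x, h x y * f x ∂ν))
      simp only [hgdef]
      linarith
    have htvpost : tvDist (posterior h μ y) (posterior h ν y) ≤ g y / (∫ x, h x y ∂μ) :=
      S12.tvDist_le (div_nonneg hg0 hyμ.le) bound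
    have htvpost0 : 0 ≤ tvDist (posterior h μ y) (posterior h ν y) :=
      S12.tvDist_nonneg_of_bdd ⟨_, fun r hr => bound r hr⟩
    exact ⟨(le_div_iff₀ hyμ).1 htvpost, mul_nonneg htvpost0 (integral_nonneg h0y)⟩
  have part1 : (∫ y, tvDist (posterior h μ y) (posterior h ν y) * (∫ x, h x y ∂μ) ∂ψ)
      ≤ ∫ y, g y ∂ψ :=
    integral_mono_of_nonneg (hae.mono fun y hy => hy.2) hintg (hae.mono fun y hy => hy.1)
  have hαμm : Measurable fun y => ∫ x, h x y ∂μ := by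
    rw [S12.alpha_eq hm h0 μ]; exact (S12.measurable_G hm μ).ennreal_toReal
  have hανm : Measurable fun y => ∫ x, h x y ∂ν := by
    rw [S12.alpha_eq hm h0 ν]; exact (S12.measurable_G hm ν).ennreal_toReal
  have hchan : tvDist (channelOut ψ h μ) (channelOut ψ h ν)
      = ∫ y, |(∫ x, h x y ∂μ) - ∫ x, h x y ∂ν| ∂ψ :=
    S12.tvDist_withDensity ψ hαμm hανm (fun y => integral_nonneg fun x => h0 x y)
      (fun y => integral_nonneg fun x => h0 x y) hintαμ hintαν
  have hDob' := hDob μ ν inferInstance inferInstance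
  rw [hchan] at hDob'
  refine ⟨?_, ?_⟩
  · rw [← hig]; exact part1
  · have key : tvDist μ ν + (1 - δ) * tvDist μ ν = (2 - δ) * tvDist μ ν := by ring
    linarith
end

section
/- Fix a contraction factor β ∈ (0,1) and a bounded function r on a set S × A with A finite. If two bounded functions V₁, V₂ : S → ℝ satisfy the fixed-point equations V_i(s) = min_{a∈A} [ r_i(s,a) + β·(P_i V_i)(s,a) ] for bounded operators P_i with ‖P_i f‖_∞ ≤ ‖f‖_∞ (expectation operators), then ‖V₁ − V₂‖_∞ ≤ (1/(1−β)) · [ sup_{s,a}|r₁(s,a) − r₂(s,a)| + β·sup_{s,a}|(P₁V₂)(s,a) − (P₂V₂)(s,a)| ]. -/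
lemma ciInf_abs_sub_le {A : Type*} [Fintype A] [Nonempty A] (f g : A → ℝ) (c : ℝ)
    (h : ∀ a, |f a - g a| ≤ c) : |(⨅ a, f a) - ⨅ a, g a| ≤ c := by
  rw [abs_le]
  constructor
  · obtain ⟨a, ha⟩ := Finite.exists_min f
    have h1 : (⨅ b, g b) ≤ g a := ciInf_le (Finite.bddBelow_range g) a
    have h2 : f a ≤ ⨅ b, f b := le_ciInf ha
    have := abs_le.mp (h a)
    linarith
  · obtain ⟨a, ha⟩ := Finite.exists_min g
    have h1 : (⨅ b, f b) ≤ f a := ciInf_le (Finite.bddBelow_range f) a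
    have h2 : g a ≤ ⨅ b, g b := le_ciInf ha
    have := abs_le.mp (h a)
    linarith

/-- Comparison of fixed points of two Bellman operators: if `V i` is the fixed
point of `V ↦ min_a (r i (·,a) + β · (P i V)(·,a))` with expectation operators
`P i` of norm at most one, then `‖V₁ - V₂‖_∞` is controlled by the mismatch of
the costs and of the transition operators. -/
theorem stmt_16 {S A : Type*} [Fintype A] [Nonempty A]
    (β : ℝ) (hβ0 : 0 < β) (hβ1 : β < 1)
    (r₁ r₂ : S → A → ℝ)
    (hr₁ : ∃ C, ∀ s a, |r₁ s a| ≤ C) (hr₂ : ∃ C, ∀ s a, |r₂ s a| ≤ C)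
    (P₁ P₂ : (S → ℝ) → S → A → ℝ)
    (hP₁lin : IsLinearMap ℝ P₁) (hP₂lin : IsLinearMap ℝ P₂)
    (hP₁pos : ∀ f : S → ℝ, (∀ s, 0 ≤ f s) → ∀ s a, 0 ≤ P₁ f s a)
    (hP₂pos : ∀ f : S → ℝ, (∀ s, 0 ≤ f s) → ∀ s a, 0 ≤ P₂ f s a)
    (hP₁norm : ∀ (f : S → ℝ) (C : ℝ), (∀ s, |f s| ≤ C) → ∀ s a, |P₁ f s a| ≤ C)
    (hP₂norm : ∀ (f : S → ℝ) (C : ℝ), (∀ s, |f s| ≤ C) → ∀ s a, |P₂ f s a| ≤ C)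
    (V₁ V₂ : S → ℝ)
    (hV₁bdd : ∃ C, ∀ s, |V₁ s| ≤ C) (hV₂bdd : ∃ C, ∀ s, |V₂ s| ≤ C)
    (hV₁ : ∀ s, V₁ s = ⨅ a : A, (r₁ s a + β * P₁ V₁ s a))
    (hV₂ : ∀ s, V₂ s = ⨅ a : A, (r₂ s a + β * P₂ V₂ s a))
    (Dr DP : ℝ)
    (hDr : ∀ s a, |r₁ s a - r₂ s a| ≤ Dr)
    (hDP : ∀ s a, |P₁ V₂ s a - P₂ V₂ s a| ≤ DP) :
    ∀ s, |V₁ s - V₂ s| ≤ (1 / (1 - β)) * (Dr + β * DP) := by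
  intro s
  obtain ⟨C₁, hC₁⟩ := hV₁bdd
  obtain ⟨C₂, hC₂⟩ := hV₂bdd
  set T : Set ℝ := Set.range (fun t => |V₁ t - V₂ t|) with hT
  have hTne : T.Nonempty := ⟨|V₁ s - V₂ s|, ⟨s, rfl⟩⟩
  have hTbdd : BddAbove T := by
    refine ⟨C₁ + C₂, ?_⟩
    rintro x ⟨t, rfl⟩
    calc |V₁ t - V₂ t| ≤ |V₁ t| + |V₂ t| := abs_sub _ _
      _ ≤ C₁ + C₂ := add_le_add (hC₁ t) (hC₂ t)
  set D : ℝ := sSup T with hD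
  have hle : ∀ t, |V₁ t - V₂ t| ≤ D := fun t => le_csSup hTbdd ⟨t, rfl⟩
  -- pointwise difference of P₁
  have hsub : ∀ t a, |P₁ V₁ t a - P₁ V₂ t a| ≤ D := by
    intro t a
    have heq : P₁ V₁ t a - P₁ V₂ t a = P₁ (V₁ - V₂) t a := by
      rw [hP₁lin.map_sub]; simp
    rw [heq]
    exact hP₁norm (V₁ - V₂) D (fun u => hle u) t a
  have hkey : ∀ t, |V₁ t - V₂ t| ≤ Dr + β * DP + β * D := by
    intro t
    rw [hV₁ t, hV₂ t]
    apply ciInf_abs_sub_le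
    intro a
    have h1 := hsub t a
    have h2 := hDP t a
    have h3 := hDr t a
    have : |(r₁ t a + β * P₁ V₁ t a) - (r₂ t a + β * P₂ V₂ t a)| ≤
        |r₁ t a - r₂ t a| + β * |P₁ V₁ t a - P₁ V₂ t a| + β * |P₁ V₂ t a - P₂ V₂ t a| := by
      have e : (r₁ t a + β * P₁ V₁ t a) - (r₂ t a + β * P₂ V₂ t a) =
          (r₁ t a - r₂ t a) + β * (P₁ V₁ t a - P₁ V₂ t a) + β * (P₁ V₂ t a - P₂ V₂ t a) := by
        ring
      rw [e]
      calc |(r₁ t a - r₂ t a) + β * (P₁ V₁ t a - P₁ V₂ t a) + β * (P₁ V₂ t a - P₂ V₂ t a)|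
          ≤ |(r₁ t a - r₂ t a) + β * (P₁ V₁ t a - P₁ V₂ t a)| + |β * (P₁ V₂ t a - P₂ V₂ t a)| :=
            abs_add_le _ _
        _ ≤ |r₁ t a - r₂ t a| + |β * (P₁ V₁ t a - P₁ V₂ t a)| + |β * (P₁ V₂ t a - P₂ V₂ t a)| := by
            have := abs_add_le (r₁ t a - r₂ t a) (β * (P₁ V₁ t a - P₁ V₂ t a))
            linarith
        _ = |r₁ t a - r₂ t a| + β * |P₁ V₁ t a - P₁ V₂ t a| + β * |P₁ V₂ t a - P₂ V₂ t a| := by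
            rw [abs_mul, abs_mul, abs_of_pos hβ0]
    nlinarith
  have hDle : D ≤ Dr + β * DP + β * D := by
    apply csSup_le hTne
    rintro x ⟨t, rfl⟩
    exact hkey t
  have hβ' : 0 < 1 - β := by linarith
  have hDfin : D ≤ (1 / (1 - β)) * (Dr + β * DP) := by
    have : D * (1 - β) ≤ Dr + β * DP := by nlinarith
    rw [one_div, inv_mul_eq_div, le_div_iff₀ hβ']
    linarith [this]
  exact (hle s).trans hDfin
end
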